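/- Suppose (X, Π) is a quasiconcave quasisubmodular aggregative game. If x* is a fESS of (X, Π) and x lies between x' and x* (i.e., x' ≤ x ≤ x* or x* ≤ x ≤ x'), then Π(x, a(x, x')) ≥ Π(x', a(x, x')). -/
import Mathlib


theorem stmt16
    {X Z : Type*} [LinearOrder X] [LinearOrder Z] [Nonempty X]
    (agg : X → X → Z)
    (hsym : ∀ x y : X, agg x y = agg y x)
    (hmono : ∀ x' x'' y' y'' : X, x' ≤ x'' → y' ≤ y'' → (x'', y'') ≠ (x', y') →
      agg x' y' < agg x'' y'')
    (Pi : X → Z → ℝ)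
    (hqsub : ∀ (x' x'' : X) (z' z'' : Z), x' < x'' → z' < z'' →
      (0 ≤ Pi x'' z'' - Pi x' z'' → 0 ≤ Pi x'' z' - Pi x' z') ∧
      (0 < Pi x'' z'' - Pi x' z'' → 0 < Pi x'' z' - Pi x' z'))
    (hqc : ∀ (x x' x'' : X) (z : Z), x < x' → x' < x'' →
      min (Pi x z) (Pi x'' z) ≤ Pi x' z)
    (xs : X) (hfess : ∀ x : X, Pi x (agg xs x) ≤ Pi xs (agg xs x))
    (x x' : X) (hbet : (x' ≤ x ∧ x ≤ xs) ∨ (xs ≤ x ∧ x ≤ x')) :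
    Pi x' (agg x x') ≤ Pi x (agg x x') := by
  rcases hbet with ⟨hx'x, hxxs⟩ | ⟨hxsx, hxx'⟩
  · rcases eq_or_lt_of_le hx'x with rfl | hlt
    · exact le_refl _
    rcases eq_or_lt_of_le hxxs with rfl | hlt2
    · exact hfess x'
    · have hz : agg x x' < agg xs x' :=
        hmono x xs x' x' hlt2.le le_rfl (by simp [Prod.ext_iff, hlt2.ne'])
      have hqcv := hqc x' x xs (agg xs x') hlt hlt2
      have hf := hfess x'
      rw [min_eq_left hf] at hqcv
      have := (hqsub x' x (agg x x') (agg xs x') hlt hz).1 (by linarith)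
      linarith
  · rcases eq_or_lt_of_le hxx' with rfl | hlt
    · exact le_refl _
    rcases eq_or_lt_of_le hxsx with rfl | hlt2
    · exact hfess x'
    · have hz : agg xs x' < agg x x' :=
        hmono xs x x' x' hlt2.le le_rfl (by simp [Prod.ext_iff, hlt2.ne'])
      have hqcv := hqc xs x x' (agg xs x') hlt2 hlt
      have hf := hfess x'
      rw [min_eq_right hf] at hqcv
      by_contra h
      push_neg at h
      have := (hqsub x x' (agg xs x') (agg x x') hlt hz).2 (by linarith)
      linarith
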